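/- arXiv:2201.09507 — 3 statements merged into one kernel-verified Lean document; each statement's English description precedes it below -/
import Mathlib

section
/- Suppose (R̂₁, R̂') is an optimal solution to the rank-relaxed problem, i.e., it is feasible and b^H(R̂₁+R̂')b ≥ b^H(R₁+R')b for every feasible pair (R₁, R'). Then the pair (R̂₁+R̂', 0) is also feasible for the rank-relaxed problem and attains the same objective value b^H(R̂₁+R̂')b; hence it is also an optimal solution. (Lemma 1 of the paper.) -/
open Matrix Finset ComplexOrder

/-- The (real-valued) quadratic form `vᴴ R v` for a complex matrix `R`. -/
noncomputable def quadForm {M : ℕ} (R : Matrix (Fin M) (Fin M) ℂ) (v : Fin M → ℂ) : ℝ :=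
  (star v ⬝ᵥ (R *ᵥ v)).re

/-- Feasibility for the rank-relaxed problem: `R₁, R'` Hermitian PSD,
`hᴴ R₁ h ≥ σ²γ̄` and `tr(R₁ + R') ≤ P_t`. -/
def FeasibleRelaxed {M : ℕ} (Pt σ γ : ℝ) (h : Fin M → ℂ)
    (R₁ R' : Matrix (Fin M) (Fin M) ℂ) : Prop :=
  R₁.PosSemidef ∧ R'.PosSemidef ∧ σ ^ 2 * γ ≤ quadForm R₁ h ∧ ((R₁ + R').trace).re ≤ Pt

/-- Lemma 1: If `(R̂₁, R̂')` is optimal for the rank-relaxed problem, then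
`(R̂₁ + R̂', 0)` is feasible, attains the same objective value, and is also optimal. -/
theorem stmt_0 {M : ℕ} (hM : 1 ≤ M) (h b : Fin M → ℂ) (hh : h ≠ 0) (hb : b ≠ 0)
    (Pt σ γ : ℝ) (hPt : 0 < Pt) (hσ : 0 < σ) (hγ : 0 ≤ γ)
    (Rhat1 Rhat' : Matrix (Fin M) (Fin M) ℂ)
    (hfeas : FeasibleRelaxed Pt σ γ h Rhat1 Rhat')
    (hopt : ∀ R₁ R', FeasibleRelaxed Pt σ γ h R₁ R' →
      quadForm (R₁ + R') b ≤ quadForm (Rhat1 + Rhat') b) :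
    FeasibleRelaxed Pt σ γ h (Rhat1 + Rhat') 0 ∧
    quadForm ((Rhat1 + Rhat') + 0) b = quadForm (Rhat1 + Rhat') b ∧
    ∀ R₁ R', FeasibleRelaxed Pt σ γ h R₁ R' →
      quadForm (R₁ + R') b ≤ quadForm ((Rhat1 + Rhat') + 0) b := by
  obtain ⟨h1, h2, h3, h4⟩ := hfeas
  have hq0 : 0 ≤ quadForm Rhat' h := by
    have := h2.dotProduct_mulVec_nonneg h
    simpa [quadForm, Complex.zero_le_real] using this.1
  have hsum : quadForm (Rhat1 + Rhat') h = quadForm Rhat1 h + quadForm Rhat' h := by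
    simp [quadForm, Matrix.add_mulVec, dotProduct_add]
  have hfeas' : FeasibleRelaxed Pt σ γ h (Rhat1 + Rhat') 0 := by
    refine ⟨h1.add h2, Matrix.PosSemidef.zero, ?_, by simpa using h4⟩
    rw [hsum]
    linarith
  refine ⟨hfeas', by simp, fun R₁ R' hf => ?_⟩
  simpa using hopt R₁ R' hf
end

section
/- Assume σ²γ̄ ≤ P_t·|h^H b|²/‖b‖². Let w̄ = √P_t · b/‖b‖ and R̄₁ = w̄ w̄^H. Then (R̄₁, 0) is feasible for problem (22) (in particular h^H R̄₁ h ≥ σ²γ̄, tr(R̄₁) = P_t, rank(R̄₁) ≤ 1), its objective value is b^H R̄₁ b = P_t‖b‖², and every feasible pair (R₁, R') of problem (22) satisfies b^H(R₁+R')b ≤ P_t‖b‖². Hence (R̄₁, 0) is an optimal solution to problem (22). (Theorem 1, first case.) -/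
open Matrix Finset ComplexOrder

/-- Squared Euclidean norm of a complex vector. -/
noncomputable def normSqV {M : ℕ} (v : Fin M → ℂ) : ℝ :=
  ∑ i, Complex.normSq (v i)

/-- Euclidean norm of a complex vector. -/
noncomputable def normV {M : ℕ} (v : Fin M → ℂ) : ℝ :=
  Real.sqrt (normSqV v)

/-- Feasibility for problem (22): `R₁, R'` Hermitian PSD, `hᴴ R₁ h ≥ σ²γ̄`,
`tr(R₁ + R') ≤ P_t`, `rank R₁ ≤ 1` and `rank R' ≤ M - 1`. -/
def Feasible22 {M : ℕ} (Pt σ γ : ℝ) (h : Fin M → ℂ)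
    (R₁ R' : Matrix (Fin M) (Fin M) ℂ) : Prop :=
  R₁.PosSemidef ∧ R'.PosSemidef ∧ σ ^ 2 * γ ≤ quadForm R₁ h ∧ ((R₁ + R').trace).re ≤ Pt ∧
    R₁.rank ≤ 1 ∧ R'.rank ≤ M - 1

/-- Cauchy–Schwarz for complex sums, `normSq` version. -/
lemma normSq_sum_le {M : ℕ} (a v : Fin M → ℂ) :
    Complex.normSq (∑ j, a j * v j) ≤ (∑ j, Complex.normSq (a j)) * ∑ j, Complex.normSq (v j) := by
  have h1 : ‖∑ j, a j * v j‖ ≤ ∑ j, ‖a j‖ * ‖v j‖ := by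
    calc ‖∑ j, a j * v j‖ ≤ ∑ j, ‖a j * v j‖ := by
          simpa using norm_sum_le Finset.univ (fun j => a j * v j)
      _ = _ := by simp [norm_mul]
  calc Complex.normSq (∑ j, a j * v j) = ‖∑ j, a j * v j‖ ^ 2 := (Complex.sq_norm _).symm
    _ ≤ (∑ j, ‖a j‖ * ‖v j‖) ^ 2 :=
        pow_le_pow_left₀ (norm_nonneg _) h1 2
    _ ≤ (∑ j, ‖a j‖ ^ 2) * ∑ j, ‖v j‖ ^ 2 :=
        Finset.sum_mul_sq_le_sq_mul_sq _ _ _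
    _ = _ := by simp [Complex.sq_norm]

/-- `vᴴ (w wᴴ) v = normSq (vᴴ w)`. -/
lemma dot_vecMulVec {M : ℕ} (w v : Fin M → ℂ) :
    star v ⬝ᵥ (vecMulVec w (star w) *ᵥ v) = (Complex.normSq (star v ⬝ᵥ w) : ℂ) := by
  have hmv : (vecMulVec w (star w)) *ᵥ v = fun i => w i * (star w ⬝ᵥ v) := by
    ext i; simp [vecMulVec, mulVec, dotProduct, Finset.mul_sum, mul_assoc]
  have hsw : star w ⬝ᵥ v = star (star v ⬝ᵥ w) := by
    simp [dotProduct, Finset.sum_comm, mul_comm]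
  rw [hmv]
  have : star v ⬝ᵥ (fun i => w i * (star w ⬝ᵥ v)) = (star v ⬝ᵥ w) * (star w ⬝ᵥ v) := by
    simp [dotProduct, Finset.sum_mul, mul_assoc]
  rw [this, hsw]
  simp [Complex.star_def, Complex.mul_conj]

lemma quadForm_vecMulVec {M : ℕ} (w v : Fin M → ℂ) :
    quadForm (vecMulVec w (star w)) v = Complex.normSq (star v ⬝ᵥ w) := by
  rw [quadForm, dot_vecMulVec]; simp

open scoped MatrixOrder

/-- `vᴴ R v ≤ tr(R) ‖v‖²` for PSD `R`. -/
lemma quadForm_le_trace_mul {M : ℕ} {R : Matrix (Fin M) (Fin M) ℂ} (hR : R.PosSemidef)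
    (v : Fin M → ℂ) : quadForm R v ≤ R.trace.re * normSqV v := by
  classical
  set A := CFC.sqrt R with hAdef
  have hAA : A * A = R := CFC.sqrt_mul_sqrt_self R hR.nonneg
  have hherm : Aᴴ = A := (CFC.sqrt_nonneg R).posSemidef.1
  have hconj : ∀ i j, (starRingEnd ℂ) (A i j) = A j i := by
    intro i j
    have := congrFun (congrFun hherm j) i
    simpa [conjTranspose_apply] using this
  have hquad : quadForm R v = ∑ i, Complex.normSq ((A *ᵥ v) i) := by
    have h1 : R *ᵥ v = A *ᵥ (A *ᵥ v) := by rw [mulVec_mulVec, hAA]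
    have h2 : star v ⬝ᵥ (A *ᵥ (A *ᵥ v)) = star (A *ᵥ v) ⬝ᵥ (A *ᵥ v) := by
      rw [dotProduct_mulVec, star_mulVec, hherm]
    rw [quadForm, h1, h2]
    simp [dotProduct, Complex.normSq_apply, Complex.re_sum, mul_comm]
  have htr : R.trace.re = ∑ i, ∑ j, Complex.normSq (A i j) := by
    rw [← hAA, Matrix.trace, Complex.re_sum]
    refine Finset.sum_congr rfl fun i _ => ?_
    rw [Matrix.diag_apply, Matrix.mul_apply, Complex.re_sum]
    refine Finset.sum_congr rfl fun j _ => ?_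
    rw [← hconj i j, Complex.mul_conj]
    simp
  rw [hquad, htr, Finset.sum_mul]
  refine Finset.sum_le_sum fun i _ => ?_
  have : (A *ᵥ v) i = ∑ j, A i j * v j := rfl
  rw [this]
  exact normSq_sum_le _ _

/-- Theorem 1, first case: if `σ²γ̄ ≤ P_t |hᴴb|²/‖b‖²`, then with
`w̄ = √P_t · b/‖b‖` and `R̄₁ = w̄ w̄ᴴ`, the pair `(R̄₁, 0)` is feasible for problem (22),
`tr(R̄₁) = P_t`, its objective value is `bᴴ R̄₁ b = P_t ‖b‖²`, and every feasible
pair of problem (22) has objective value at most `P_t ‖b‖²`; hence `(R̄₁, 0)` is optimal. -/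
theorem stmt_1 {M : ℕ} (hM : 1 ≤ M) (h b : Fin M → ℂ) (hh : h ≠ 0) (hb : b ≠ 0)
    (Pt σ γ : ℝ) (hPt : 0 < Pt) (hσ : 0 < σ) (hγ : 0 ≤ γ)
    (hcase : σ ^ 2 * γ ≤ Pt * Complex.normSq (star h ⬝ᵥ b) / normSqV b)
    (w : Fin M → ℂ) (hw : w = fun i => ((Real.sqrt Pt / normV b : ℝ) : ℂ) * b i) :
    Feasible22 Pt σ γ h (vecMulVec w (star w)) 0 ∧
    ((vecMulVec w (star w)).trace).re = Pt ∧
    quadForm (vecMulVec w (star w)) b = Pt * normSqV b ∧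
    ∀ R₁ R', Feasible22 Pt σ γ h R₁ R' → quadForm (R₁ + R') b ≤ Pt * normSqV b := by
  classical
  set c : ℝ := Real.sqrt Pt / normV b with hc
  -- basic positivity facts
  have hnb : 0 < normSqV b := by
    rcases Function.ne_iff.mp hb with ⟨i, hi⟩
    have : 0 < Complex.normSq (b i) := Complex.normSq_pos.mpr hi
    exact Finset.sum_pos' (fun j _ => Complex.normSq_nonneg _) ⟨i, Finset.mem_univ i, this⟩
  have hnv : 0 < normV b := Real.sqrt_pos.mpr hnb
  have hc2 : c ^ 2 = Pt / normSqV b := by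
    rw [hc, div_pow, Real.sq_sqrt hPt.le, normV, Real.sq_sqrt hnb.le]
  -- key dot product computation
  have hdot : ∀ v : Fin M → ℂ, star v ⬝ᵥ w = (c : ℂ) * (star v ⬝ᵥ b) := by
    intro v
    rw [hw]
    simp only [dotProduct, Finset.mul_sum]
    exact Finset.sum_congr rfl fun i _ => by ring
  have hquad : ∀ v : Fin M → ℂ,
      quadForm (vecMulVec w (star w)) v = c ^ 2 * Complex.normSq (star v ⬝ᵥ b) := by
    intro v
    rw [quadForm_vecMulVec, hdot, Complex.normSq_mul, Complex.normSq_ofReal, sq]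
  -- PSD of w wᴴ
  have hpsd : (vecMulVec w (star w)).PosSemidef := by
    refine Matrix.PosSemidef.of_dotProduct_mulVec_nonneg ?_ ?_
    · ext i j
      simp [vecMulVec, conjTranspose_apply, mul_comm]
    · intro v
      rw [dot_vecMulVec]
      exact_mod_cast Complex.normSq_nonneg _
  -- trace
  have htr : ((vecMulVec w (star w)).trace).re = Pt := by
    have : (vecMulVec w (star w)).trace = ∑ i, w i * (starRingEnd ℂ) (w i) := by
      simp [Matrix.trace, Matrix.diag, Matrix.vecMulVec_apply, Complex.star_def]
    rw [this]
    have : ∑ i, w i * (starRingEnd ℂ) (w i) = ((∑ i, Complex.normSq (w i) : ℝ) : ℂ) := by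
      push_cast
      exact Finset.sum_congr rfl fun i _ => Complex.mul_conj _
    rw [this, Complex.ofReal_re]
    have hwi : ∀ i, Complex.normSq (w i) = c ^ 2 * Complex.normSq (b i) := by
      intro i; rw [hw]; simp [Complex.normSq_mul, Complex.normSq_ofReal, sq]
    rw [Finset.sum_congr rfl fun i _ => hwi i, ← Finset.mul_sum, hc2]
    have hsum : ∑ i, Complex.normSq (b i) = normSqV b := rfl
    rw [hsum, div_mul_cancel₀ _ hnb.ne']
  -- rank
  have hrank : (vecMulVec w (star w)).rank ≤ 1 := by
    rw [vecMulVec_eq (Fin 1)]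
    calc (replicateCol (Fin 1) w * replicateRow (Fin 1) (star w)).rank ≤ (replicateRow (Fin 1) (star w)).rank :=
          rank_mul_le_right _ _
      _ ≤ Fintype.card (Fin 1) := rank_le_card_height _
      _ = 1 := by simp
  refine ⟨⟨hpsd, Matrix.PosSemidef.zero, ?_, ?_, hrank, ?_⟩, htr, ?_, ?_⟩
  · -- h constraint
    rw [hquad h, hc2, div_mul_eq_mul_div]
    exact hcase
  · rw [add_zero]; exact htr.le
  · simp [Matrix.rank_zero]
  · -- objective value
    rw [hquad b]
    have hbb : star b ⬝ᵥ b = ((normSqV b : ℝ) : ℂ) := by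
      rw [normSqV]
      push_cast
      refine Finset.sum_congr rfl fun i _ => ?_
      rw [Pi.star_apply, Complex.star_def, ← Complex.normSq_eq_conj_mul_self]
    rw [hbb, Complex.normSq_ofReal, hc2]
    field_simp
  · -- upper bound
    intro R₁ R' ⟨h1, h2, _, h4, _, _⟩
    have hadd : quadForm (R₁ + R') b = quadForm R₁ b + quadForm R' b := by
      simp [quadForm, add_mulVec, dotProduct_add]
    rw [hadd]
    calc quadForm R₁ b + quadForm R' b
        ≤ R₁.trace.re * normSqV b + R'.trace.re * normSqV b :=
          add_le_add (quadForm_le_trace_mul h1 b) (quadForm_le_trace_mul h2 b)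
      _ = ((R₁ + R').trace).re * normSqV b := by rw [trace_add, Complex.add_re]; ring
      _ ≤ Pt * normSqV b := mul_le_mul_of_nonneg_right h4 hnb.le
end

section
/- Assume h^H b ≠ 0, h and b are linearly independent (so b_⊥ ≠ 0), and P_t·|h^H b|²/‖b‖² ≤ σ²γ̄ ≤ P_t·‖h‖². Define w̄ = √(σ²γ̄/‖h‖²)·h̄·(β/|β|) + √(P_t − σ²γ̄/‖h‖²)·b̄_⊥. Then ‖w̄‖² = P_t, |h^H w̄|² = σ²γ̄, and |b^H w̄|² = ( |β|·√(σ²γ̄)/‖h‖ + ‖b_⊥‖·√(P_t − σ²γ̄/‖h‖²) )². In particular, the pair (w̄ w̄^H, 0) is feasible for problem (22). (Theorem 1, second case: feasibility and objective value of the closed-form beamformer in Eq. (23).) -/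
open Matrix Finset ComplexOrder

lemma star_dot_self {M : ℕ} (v : Fin M → ℂ) : star v ⬝ᵥ v = (normSqV v : ℂ) := by
  simp only [dotProduct, normSqV, Complex.ofReal_sum, Pi.star_apply]
  refine Finset.sum_congr rfl fun i _ => ?_
  rw [Complex.star_def, ← Complex.normSq_eq_conj_mul_self]

lemma star_dot_comm {M : ℕ} (u v : Fin M → ℂ) :
    star u ⬝ᵥ v = starRingEnd ℂ (star v ⬝ᵥ u) := by
  simp only [dotProduct, map_sum, Pi.star_apply, Complex.star_def]
  refine Finset.sum_congr rfl fun i _ => ?_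
  rw [RingHom.map_mul, Complex.conj_conj]
  exact mul_comm _ _

lemma normSqV_pos {M : ℕ} {v : Fin M → ℂ} (hv : v ≠ 0) : 0 < normSqV v := by
  obtain ⟨i, hi⟩ := Function.ne_iff.mp hv
  exact Finset.sum_pos' (fun j _ => Complex.normSq_nonneg _)
    ⟨i, Finset.mem_univ i, by simpa using Complex.normSq_pos.mpr hi⟩

lemma mulVec_vecMulVec' {M : ℕ} (w h : Fin M → ℂ) :
    vecMulVec w (star w) *ᵥ h = (star w ⬝ᵥ h) • w := by
  ext i
  simp only [mulVec, dotProduct, vecMulVec_apply, Pi.smul_apply, smul_eq_mul,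
    Finset.sum_mul]
  exact Finset.sum_congr rfl fun j _ => by ring

lemma trace_vecMulVec' {M : ℕ} (w : Fin M → ℂ) :
    (vecMulVec w (star w)).trace = (normSqV w : ℂ) := by
  simp only [Matrix.trace, Matrix.diag, vecMulVec_apply, Pi.star_apply, normSqV,
    Complex.ofReal_sum]
  exact Finset.sum_congr rfl fun i _ => by rw [Complex.star_def, Complex.mul_conj]

/-- Theorem 1, second case (feasibility and objective value): with
`h̄ = h/‖h‖`, `β = h̄ᴴ b`, `b⊥ = b − β h̄`, `b̄⊥ = b⊥/‖b⊥‖`, assuming `hᴴ b ≠ 0`,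
`h, b` linearly independent and `P_t |hᴴb|²/‖b‖² ≤ σ²γ̄ ≤ P_t ‖h‖²`, the beamformer
`w̄ = √(σ²γ̄/‖h‖²)·h̄·(β/|β|) + √(P_t − σ²γ̄/‖h‖²)·b̄⊥` satisfies `‖w̄‖² = P_t`,
`|hᴴw̄|² = σ²γ̄`, `|bᴴw̄|² = (|β|√(σ²γ̄)/‖h‖ + ‖b⊥‖√(P_t − σ²γ̄/‖h‖²))²`, and
`(w̄ w̄ᴴ, 0)` is feasible for problem (22). -/
theorem stmt_2 {M : ℕ} (hM : 1 ≤ M) (h b : Fin M → ℂ) (hh : h ≠ 0) (hb : b ≠ 0)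
    (Pt σ γ : ℝ) (hPt : 0 < Pt) (hσ : 0 < σ) (hγ : 0 ≤ γ)
    (hbar : Fin M → ℂ) (hhbar : hbar = (normV h : ℂ)⁻¹ • h)
    (β : ℂ) (hβ : β = star hbar ⬝ᵥ b)
    (bperp : Fin M → ℂ) (hbperp : bperp = b - β • hbar)
    (bperpbar : Fin M → ℂ) (hbperpbar : bperpbar = (normV bperp : ℂ)⁻¹ • bperp)
    (hβne : star h ⬝ᵥ b ≠ 0)
    (hindep : LinearIndependent ℂ ![h, b])
    (hlow : Pt * Complex.normSq (star h ⬝ᵥ b) / normSqV b ≤ σ ^ 2 * γ)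
    (hhigh : σ ^ 2 * γ ≤ Pt * normSqV h)
    (w : Fin M → ℂ)
    (hw : w = ((Real.sqrt (σ ^ 2 * γ / normSqV h) : ℝ) : ℂ) • ((β / (‖β‖ : ℂ)) • hbar)
            + ((Real.sqrt (Pt - σ ^ 2 * γ / normSqV h) : ℝ) : ℂ) • bperpbar) :
    normSqV w = Pt ∧
    Complex.normSq (star h ⬝ᵥ w) = σ ^ 2 * γ ∧
    Complex.normSq (star b ⬝ᵥ w) =
      (‖β‖ * Real.sqrt (σ ^ 2 * γ) / normV h
        + normV bperp * Real.sqrt (Pt - σ ^ 2 * γ / normSqV h)) ^ 2 ∧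
    Feasible22 Pt σ γ h (vecMulVec w (star w)) 0 := by
  -- basic positivity facts for h
  have hNh : 0 < normSqV h := normSqV_pos hh
  have hnh : 0 < normV h := Real.sqrt_pos.mpr hNh
  have hnh2 : normV h * normV h = normSqV h := Real.mul_self_sqrt hNh.le
  have hnhne : (normV h : ℂ) ≠ 0 := by exact_mod_cast hnh.ne'
  have hnhC : (normV h : ℂ) * (normV h : ℂ) = (normSqV h : ℂ) := by
    rw [← Complex.ofReal_mul, hnh2]
  -- star hbar
  have hsbar : star hbar = (normV h : ℂ)⁻¹ • star h := by
    rw [hhbar, star_smul]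
    congr 1
    rw [star_inv₀]
    simp [Complex.star_def, Complex.conj_ofReal]
  have e1 : star hbar ⬝ᵥ hbar = 1 := by
    rw [hsbar, hhbar, smul_dotProduct, dotProduct_smul, star_dot_self]
    simp only [smul_eq_mul]
    field_simp
    rw [sq, hnhC]
  -- β nonzero
  have hβ0 : β ≠ 0 := by
    rw [hβ, hsbar, smul_dotProduct]
    simp only [smul_eq_mul]
    exact mul_ne_zero (inv_ne_zero hnhne) hβne
  have e2' : star hbar ⬝ᵥ bperp = 0 := by
    rw [hbperp, dotProduct_sub, dotProduct_smul, e1, ← hβ]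
    simp
  -- bperp nonzero
  have hbperpne : bperp ≠ 0 := by
    intro h0
    rw [hbperp, sub_eq_zero] at h0
    have h1 : b = (β * (normV h : ℂ)⁻¹) • h := by
      rw [h0, hhbar, smul_smul]
    have hc : (β * (normV h : ℂ)⁻¹) ≠ 0 := mul_ne_zero hβ0 (inv_ne_zero hnhne)
    have := (linearIndependent_fin2.mp hindep).2 (β * (normV h : ℂ)⁻¹)⁻¹
    apply this
    rw [Matrix.cons_val_one, Matrix.cons_val_zero, Matrix.cons_val_zero, h1, smul_smul,
      inv_mul_cancel₀ hc, one_smul]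
  have hNb : 0 < normSqV bperp := normSqV_pos hbperpne
  have hnb : 0 < normV bperp := Real.sqrt_pos.mpr hNb
  have hnbne : (normV bperp : ℂ) ≠ 0 := by exact_mod_cast hnb.ne'
  have hnb2 : normV bperp * normV bperp = normSqV bperp := Real.mul_self_sqrt hNb.le
  have hnbC : (normV bperp : ℂ) * (normV bperp : ℂ) = (normSqV bperp : ℂ) := by
    rw [← Complex.ofReal_mul, hnb2]
  have hsbperpbar : star bperpbar = (normV bperp : ℂ)⁻¹ • star bperp := by
    rw [hbperpbar, star_smul]
    congr 1
    rw [star_inv₀]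
    simp [Complex.star_def, Complex.conj_ofReal]
  have e3 : star bperpbar ⬝ᵥ bperpbar = 1 := by
    rw [hsbperpbar, hbperpbar, smul_dotProduct, dotProduct_smul, star_dot_self]
    simp only [smul_eq_mul]
    field_simp
    rw [sq, hnbC]
  have e2 : star hbar ⬝ᵥ bperpbar = 0 := by
    rw [hbperpbar, dotProduct_smul, e2']
    simp
  have e2s : star bperpbar ⬝ᵥ hbar = 0 := by
    rw [star_dot_comm, e2, map_zero]
  have e4 : star bperp ⬝ᵥ bperpbar = (normV bperp : ℂ) := by
    rw [hbperpbar, dotProduct_smul, star_dot_self]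
    simp only [smul_eq_mul]
    field_simp
    rw [sq, hnbC]
  have e5 : star bperp ⬝ᵥ hbar = 0 := by
    rw [star_dot_comm, e2', map_zero]
  -- the real scalars
  set s : ℝ := Real.sqrt (σ ^ 2 * γ / normSqV h) with hsdef
  set t : ℝ := Real.sqrt (Pt - σ ^ 2 * γ / normSqV h) with htdef
  have hsg : 0 ≤ σ ^ 2 * γ := by positivity
  have hs2 : s * s = σ ^ 2 * γ / normSqV h :=
    Real.mul_self_sqrt (by positivity)
  have htnn : 0 ≤ Pt - σ ^ 2 * γ / normSqV h := by
    rw [sub_nonneg, div_le_iff₀ hNh]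
    linarith
  have ht2 : t * t = Pt - σ ^ 2 * γ / normSqV h := Real.mul_self_sqrt htnn
  have hsnn : 0 ≤ s := Real.sqrt_nonneg _
  have htn : 0 ≤ t := Real.sqrt_nonneg _
  -- the unit phase q
  set q : ℂ := β / (‖β‖ : ℂ) with hqdef
  have habsne : (‖β‖ : ℝ) ≠ 0 := norm_ne_zero_iff.mpr hβ0
  have habsCne : ((‖β‖ : ℝ) : ℂ) ≠ 0 := by exact_mod_cast habsne
  have hconjβ : starRingEnd ℂ β * β = ((‖β‖ : ℝ) : ℂ) * ((‖β‖ : ℝ) : ℂ) := by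
    rw [mul_comm, Complex.mul_conj, ← Complex.ofReal_mul, ← Complex.sq_norm, sq]
  have hq1 : starRingEnd ℂ q * q = 1 := by
    rw [hqdef, map_div₀, Complex.conj_ofReal]
    rw [div_mul_div_comm, hconjβ]
    field_simp
  -- key dot products with w
  have A : star hbar ⬝ᵥ w = (s : ℂ) * q := by
    rw [hw, dotProduct_add, dotProduct_smul, dotProduct_smul, dotProduct_smul, e1, e2]
    simp only [smul_eq_mul]
    ring
  have A2 : star bperpbar ⬝ᵥ w = (t : ℂ) := by
    rw [hw, dotProduct_add, dotProduct_smul, dotProduct_smul, dotProduct_smul, e2s, e3]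
    simp only [smul_eq_mul]
    ring
  have B : star bperp ⬝ᵥ w = (t : ℂ) * (normV bperp : ℂ) := by
    rw [hw, dotProduct_add, dotProduct_smul, dotProduct_smul, dotProduct_smul, e5, e4]
    simp only [smul_eq_mul]
    ring
  have hstarh : star h = (normV h : ℂ) • star hbar := by
    rw [hsbar, smul_smul, mul_inv_cancel₀ hnhne, one_smul]
  have C : star h ⬝ᵥ w = (normV h : ℂ) * ((s : ℂ) * q) := by
    rw [hstarh, smul_dotProduct, A, smul_eq_mul]
  -- claim 2
  have claim2 : Complex.normSq (star h ⬝ᵥ w) = σ ^ 2 * γ := by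
    rw [C, Complex.normSq_mul, Complex.normSq_mul, Complex.normSq_ofReal,
      Complex.normSq_ofReal]
    have hqn : Complex.normSq q = 1 := by
      have h1 : ((Complex.normSq q : ℝ) : ℂ) = 1 := by
        rw [Complex.normSq_eq_conj_mul_self]; exact hq1
      exact_mod_cast h1
    rw [hqn, mul_one, hnh2, hs2]
    field_simp
  -- claim 1
  have E : star w ⬝ᵥ w = ((s * s + t * t : ℝ) : ℂ) := by
    nth_rewrite 1 [hw]
    rw [star_add, star_smul, star_smul, star_smul, add_dotProduct, smul_dotProduct,
      smul_dotProduct, smul_dotProduct, A, A2]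
    simp only [smul_eq_mul, Complex.star_def, Complex.conj_ofReal]
    rw [Complex.ofReal_add, Complex.ofReal_mul, Complex.ofReal_mul]
    have h2 : (s:ℂ) * ((starRingEnd ℂ) q * ((s:ℂ) * q)) = (s:ℂ) * (s:ℂ) * ((starRingEnd ℂ) q * q) := by
      ring
    rw [h2, hq1, mul_one]
  have claim1 : normSqV w = Pt := by
    have h1 : (normSqV w : ℂ) = ((s * s + t * t : ℝ) : ℂ) := by
      rw [← star_dot_self, E]
    have h2 : normSqV w = s * s + t * t := by exact_mod_cast h1
    rw [h2, hs2, ht2]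
    ring
  -- claim 3
  have hbdec : b = bperp + β • hbar := by rw [hbperp, sub_add_cancel]
  have hconjβq : starRingEnd ℂ β * q = ((‖β‖ : ℝ) : ℂ) := by
    rw [hqdef, ← mul_div_assoc, hconjβ, mul_div_assoc, div_self habsCne, mul_one]
  have D : star b ⬝ᵥ w = ((t * normV bperp + ‖β‖ * s : ℝ) : ℂ) := by
    conv_lhs => rw [hbdec]
    rw [star_add, star_smul, add_dotProduct, smul_dotProduct, B, A]
    simp only [smul_eq_mul, Complex.star_def]
    push_cast
    rw [show (starRingEnd ℂ) β * ((s:ℂ) * q) = (starRingEnd ℂ β * q) * (s:ℂ) by ring, hconjβq]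
  have hseq : s = Real.sqrt (σ ^ 2 * γ) / normV h := by
    rw [hsdef, Real.sqrt_div hsg]
    rfl
  have claim3 : Complex.normSq (star b ⬝ᵥ w) =
      (‖β‖ * Real.sqrt (σ ^ 2 * γ) / normV h
        + normV bperp * Real.sqrt (Pt - σ ^ 2 * γ / normSqV h)) ^ 2 := by
    rw [D, Complex.normSq_ofReal, hseq]
    rw [← htdef]
    ring
  refine ⟨claim1, claim2, claim3, ?_⟩
  -- feasibility
  have hpsd : (vecMulVec w (star w)).PosSemidef := by
    have : vecMulVec w (star w) = (replicateRow Unit (star w))ᴴ * replicateRow Unit (star w) := by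
      rw [conjTranspose_replicateRow, star_star, ← vecMulVec_eq Unit]
    rw [this]; exact posSemidef_conjTranspose_mul_self _
  refine ⟨hpsd, Matrix.PosSemidef.zero, ?_, ?_, ?_, ?_⟩
  · -- quadForm
    apply le_of_eq
    unfold quadForm
    rw [mulVec_vecMulVec', dotProduct_smul, smul_eq_mul, star_dot_comm w h,
      ← Complex.normSq_eq_conj_mul_self, claim2]
    exact (Complex.ofReal_re _).symm
  · rw [add_zero, trace_vecMulVec', claim1]
    simp
  · rw [vecMulVec_eq Unit]
    exact le_trans (rank_mul_le_left _ _) ((rank_le_card_width _).trans (by simp))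
  · rw [Matrix.rank_zero]; exact Nat.zero_le _
end
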